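/- Let (b_i)_{i≥0} and (c_i)_{i≥0} be infinite sequences of non-negative real numbers such that for every index i ≥ 0 the following implication is true: if c_i < 1 then b_{i+1} ≤ b_i/(1−c_i) and c_{i+1} ≤ 2·c_i²·[b_i/(1−c_i)]². Suppose b_0 ≥ 1 and ε := 6·b_0²·c_0 ≤ 2/3. Then for every i one has c_i ≤ ε^(2^i)/(6·b_0²) and b_i ≤ √3·b_0; consequently the series Σ_i c_i converges and c_i → 0 as i → ∞. -/

import Mathlib

open Filter

set_option maxHeartbeats 1600000 in
/-- The infinite-sequence form of the paper's recursive-inequality lemma (Lemma 4). -/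
theorem infinite_recursive_inequality_lemma
    (b c : ℕ → ℝ)
    (hb : ∀ i, 0 ≤ b i) (hc : ∀ i, 0 ≤ c i)
    (hrec : ∀ i, c i < 1 →
      b (i + 1) ≤ b i / (1 - c i) ∧
      c (i + 1) ≤ 2 * c i ^ 2 * (b i / (1 - c i)) ^ 2)
    (hb0 : 1 ≤ b 0)
    (hε : 6 * b 0 ^ 2 * c 0 ≤ 2 / 3) :
    (∀ i, c i ≤ (6 * b 0 ^ 2 * c 0) ^ (2 ^ i) / (6 * b 0 ^ 2) ∧
      b i ≤ Real.sqrt 3 * b 0) ∧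
    Summable c ∧ Tendsto c atTop (nhds 0) := by
  have hb0' : (0:ℝ) < b 0 := lt_of_lt_of_le zero_lt_one hb0
  have hb0sq : (1:ℝ) ≤ b 0 ^ 2 := by nlinarith
  obtain ⟨ε, hεdef⟩ : ∃ ε : ℝ, ε = 6 * b 0 ^ 2 * c 0 := ⟨_, rfl⟩
  rw [← hεdef] at hε ⊢
  have hε0 : 0 ≤ ε := hεdef ▸ mul_nonneg (by positivity) (hc 0)
  have hε1 : ε ≤ 2/3 := hε
  have hterm : ∀ j : ℕ, ε ^ (2^j) / (6 * b 0 ^ 2) ≤ (1/9) * (2/3:ℝ)^j := by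
    intro j
    have h1 : ε ^ (2^j) ≤ ε ^ (j+1) :=
      pow_le_pow_of_le_one hε0 (hε1.trans (by norm_num))
        (Nat.succ_le_of_lt (Nat.lt_two_pow_self (n := j)))
    have h2 : ε ^ (j+1) ≤ (2/3:ℝ)^(j+1) := pow_le_pow_left₀ hε0 hε1 _
    have h3 : (6:ℝ) ≤ 6 * b 0 ^ 2 := by nlinarith
    have h4 : ε ^ (2^j) / (6 * b 0 ^ 2) ≤ (2/3:ℝ)^(j+1) / 6 :=
      div_le_div₀ (by positivity) (h1.trans h2) (by norm_num) h3
    calc ε ^ (2^j) / (6 * b 0 ^ 2) ≤ (2/3:ℝ)^(j+1) / 6 := h4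
      _ = (1/9) * (2/3:ℝ)^j := by rw [pow_succ]; ring
  have hsum : ∀ n : ℕ, (∀ j, j < n → c j ≤ ε ^ (2^j) / (6 * b 0 ^ 2)) →
      ∑ j ∈ Finset.range n, c j ≤ 1/3 := by
    intro n hcb
    have h1 : ∑ j ∈ Finset.range n, c j ≤ ∑ j ∈ Finset.range n, (1/9) * (2/3:ℝ)^j :=
      Finset.sum_le_sum fun j hj => (hcb j (Finset.mem_range.mp hj)).trans (hterm j)
    have h2 : ∑ j ∈ Finset.range n, (2/3:ℝ)^j = ((2/3:ℝ)^n - 1)/((2/3) - 1) :=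
      geom_sum_eq (by norm_num) n
    have h3 : (0:ℝ) ≤ (2/3:ℝ)^n := by positivity
    have h2' : ((2/3:ℝ)^n - 1)/((2/3:ℝ) - 1) = 3 - 3*(2/3:ℝ)^n := by
      field_simp
      ring
    rw [← Finset.mul_sum, h2, h2'] at h1
    nlinarith
  have main : ∀ i, (∀ j, j ≤ i → c j ≤ ε ^ (2^j) / (6 * b 0 ^ 2)) ∧
      b i ≤ b 0 / (1 - ∑ j ∈ Finset.range i, c j) := by
    intro i
    induction i with
    | zero =>
      constructor
      · intro j hj
        interval_cases j
        have h6 : (6 * b 0 ^ 2 : ℝ) ≠ 0 := by positivity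
        rw [pow_zero, pow_one, hεdef]
        exact le_of_eq (mul_div_cancel_left₀ (c 0) h6).symm
      · simp
    | succ i ih =>
      obtain ⟨ihc, ihb⟩ := ih
      have hci : c i ≤ ε ^ (2^i) / (6 * b 0 ^ 2) := ihc i le_rfl
      have hci19 : c i ≤ 1/9 := by
        have h1 := hterm i
        have h2 : (2/3:ℝ)^i ≤ 1 := pow_le_one₀ (by norm_num) (by norm_num)
        nlinarith
      have hci1 : c i < 1 := lt_of_le_of_lt hci19 (by norm_num)
      obtain ⟨hbrec, hcrec⟩ := hrec i hci1
      have hSnn : (0:ℝ) ≤ ∑ j ∈ Finset.range i, c j :=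
        Finset.sum_nonneg fun j _ => hc j
      have hSi : ∑ j ∈ Finset.range i, c j ≤ 1/3 :=
        hsum i (fun j hj => ihc j hj.le)
      have hSi1 : ∑ j ∈ Finset.range (i+1), c j ≤ 1/3 :=
        hsum (i+1) (fun j hj => ihc j (Nat.lt_succ_iff.mp hj))
      have hden : (0:ℝ) < 1 - c i := by linarith
      have hSpos : (0:ℝ) < 1 - ∑ j ∈ Finset.range i, c j := by linarith
      have hSsucc : ∑ j ∈ Finset.range (i+1), c j
          = (∑ j ∈ Finset.range i, c j) + c i := Finset.sum_range_succ c i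
      have hS1pos : (0:ℝ) < 1 - ∑ j ∈ Finset.range (i+1), c j := by linarith
      -- key ratio bound
      have hQ : b i / (1 - c i) ≤ b 0 / (1 - ∑ j ∈ Finset.range (i+1), c j) := by
        have h1 : b i / (1 - c i) ≤ (b 0 / (1 - ∑ j ∈ Finset.range i, c j)) / (1 - c i) := by
          gcongr
        have h2 : (b 0 / (1 - ∑ j ∈ Finset.range i, c j)) / (1 - c i)
            = b 0 / ((1 - ∑ j ∈ Finset.range i, c j) * (1 - c i)) := by
          rw [div_div]
        have h3 : (1 - ∑ j ∈ Finset.range (i+1), c j)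
            ≤ (1 - ∑ j ∈ Finset.range i, c j) * (1 - c i) := by
          rw [hSsucc]
          nlinarith [hc i]
        have h4 : b 0 / ((1 - ∑ j ∈ Finset.range i, c j) * (1 - c i))
            ≤ b 0 / (1 - ∑ j ∈ Finset.range (i+1), c j) := by
          gcongr
        linarith [h1, h4, h2 ▸ h1]
      have hQ32 : b i / (1 - c i) ≤ (3/2) * b 0 := by
        refine hQ.trans ?_
        rw [div_le_iff₀ hS1pos]
        nlinarith
      constructor
      · intro j hj
        rcases Nat.lt_succ_iff_lt_or_eq.mp (Nat.lt_succ_of_le hj) with h | h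
        · exact ihc j (Nat.lt_succ_iff.mp h)
        · subst h
          have hratnn : (0:ℝ) ≤ b i / (1 - c i) := div_nonneg (hb i) hden.le
          have h1 : 2 * c i ^ 2 * (b i / (1 - c i)) ^ 2
              ≤ 2 * (ε ^ (2^i) / (6 * b 0 ^ 2)) ^ 2 * ((3/2) * b 0) ^ 2 := by
            gcongr
            exact hc i
          have h2 : 2 * (ε ^ (2^i) / (6 * b 0 ^ 2)) ^ 2 * ((3/2) * b 0) ^ 2
              = (ε ^ (2^i)) ^ 2 / (8 * b 0 ^ 2) := by
            field_simp
            ring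
          have h3 : (ε ^ (2^i)) ^ 2 = ε ^ (2^(i+1)) := by
            rw [← pow_mul, pow_succ]
          have h4 : ε ^ (2^(i+1)) / (8 * b 0 ^ 2) ≤ ε ^ (2^(i+1)) / (6 * b 0 ^ 2) :=
            div_le_div_of_nonneg_left (by positivity) (by positivity) (by nlinarith)
          calc c (i+1) ≤ 2 * c i ^ 2 * (b i / (1 - c i)) ^ 2 := hcrec
            _ ≤ 2 * (ε ^ (2^i) / (6 * b 0 ^ 2)) ^ 2 * ((3/2) * b 0) ^ 2 := h1
            _ = ε ^ (2^(i+1)) / (8 * b 0 ^ 2) := by rw [h2, h3]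
            _ ≤ ε ^ (2^(i+1)) / (6 * b 0 ^ 2) := h4
      · exact hbrec.trans hQ
  have hsqrt : (3/2:ℝ) ≤ Real.sqrt 3 := by
    rw [show (3/2:ℝ) = Real.sqrt ((3/2)^2) from (Real.sqrt_sq (by norm_num)).symm]
    apply Real.sqrt_le_sqrt
    norm_num
  have hfinal : ∀ i, c i ≤ ε ^ (2^i) / (6 * b 0 ^ 2) ∧ b i ≤ Real.sqrt 3 * b 0 := by
    intro i
    obtain ⟨hcb, hbb⟩ := main i
    refine ⟨hcb i le_rfl, ?_⟩
    have hS : ∑ j ∈ Finset.range i, c j ≤ 1/3 :=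
      hsum i (fun j hj => hcb j hj.le)
    have hSnn : (0:ℝ) ≤ ∑ j ∈ Finset.range i, c j :=
      Finset.sum_nonneg fun j _ => hc j
    have hSpos : (0:ℝ) < 1 - ∑ j ∈ Finset.range i, c j := by linarith
    have h32 : b i ≤ (3/2) * b 0 := by
      refine hbb.trans ?_
      rw [div_le_iff₀ hSpos]
      nlinarith [mul_le_mul_of_nonneg_left hS hb0'.le]
    calc b i ≤ (3/2) * b 0 := h32
      _ ≤ Real.sqrt 3 * b 0 := mul_le_mul_of_nonneg_right hsqrt hb0'.le
  have hsummable : Summable c := by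
    have hg : Summable (fun i : ℕ => (2/3:ℝ)^i) :=
      summable_geometric_of_lt_one (by norm_num) (by norm_num)
    have hg' : Summable (fun i : ℕ => (1/9:ℝ) * (2/3)^i) := hg.mul_left _
    exact Summable.of_nonneg_of_le hc (fun i => ((hfinal i).1).trans (hterm i)) hg'
  exact ⟨hfinal, hsummable, hsummable.tendsto_atTop_zero⟩
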